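/- arXiv:math/0309286 — 2 statements merged into one kernel-verified Lean document; each statement's English description precedes it below -/
import Mathlib

section
/- Let k : (0,∞) → [0,∞) be nonincreasing and lower semicontinuous, and let σ be a locally finite positive Borel measure on ℝ^n satisfying a doubling condition. Set K(Q) = k(r_Q) for Q ∈ 𝒟. Then there exists C > 0 such that for every Q ∈ 𝒟 and every x ∈ Q, (1/C) k̄(r_Q)(x) ≤ K̄(Q)(x) = (1/σ(Q)) ∑_{Q'∈𝒟, Q'⊆Q} k(r_{Q'}) σ(Q') χ_{Q'}(x) ≤ C k̄(r_Q)(x). -/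
open MeasureTheory ENNReal Set
open scoped Classical ENNReal NNReal

noncomputable section

/-- We model `ℝ^n` as `EuclideanSpace ℝ (Fin n)`. -/
abbrev Euc (n : ℕ) := EuclideanSpace ℝ (Fin n)

/-- Indices `(k, m)` of dyadic cubes in `ℝ^n`. -/
abbrev DIdx (n : ℕ) := ℤ × (Fin n → ℤ)

/-- The dyadic cube with index `q = (k, m)`, namely `2^{-k}(m + [0,1)^n)`. -/
def dCube (n : ℕ) (q : DIdx n) : Set (Euc n) :=
  {x | ∀ i, (q.2 i : ℝ) ≤ (2:ℝ) ^ q.1 * x i ∧ (2:ℝ) ^ q.1 * x i < (q.2 i : ℝ) + 1}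

/-- The side length of the dyadic cube of index `q = (k, m)` is `2^{-k}`. -/
def sideLen (n : ℕ) (q : DIdx n) : ℝ := (2:ℝ) ^ (-q.1)

/-- Characteristic function of a dyadic cube, with values in `ℝ≥0∞`. -/
def ch (n : ℕ) (q : DIdx n) (x : Euc n) : ℝ≥0∞ := (dCube n q).indicator 1 x

/-- `K̄(Q)(x) = σ(Q)⁻¹ ∑_{Q' ⊆ Q} K(Q') σ(Q') χ_{Q'}(x)`.
(Since `σ(Q') ≤ σ(Q)` for `Q' ⊆ Q`, this is automatically `0` when `σ(Q) = 0`,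
by the convention `∞ · 0 = 0` in `ℝ≥0∞`.) -/
def Kbar (n : ℕ) (σ : Measure (Euc n)) (K : DIdx n → ℝ≥0∞) (q : DIdx n) (x : Euc n) : ℝ≥0∞ :=
  (σ (dCube n q))⁻¹ *
    ∑' q' : DIdx n, if dCube n q' ⊆ dCube n q then K q' * σ (dCube n q') * ch n q' x else 0

/-- `k̄(r)(x) = (1/σ(B(x,r))) ∫_0^r k(s) σ(B(x,s)) ds/s`. -/
def kbar (n : ℕ) (σ : Measure (Euc n)) (k : ℝ → ℝ) (r : ℝ) (x : Euc n) : ℝ≥0∞ :=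
  (σ (Metric.ball x r))⁻¹ *
    ∫⁻ s in Ioo (0:ℝ) r, ENNReal.ofReal (k s / s) * σ (Metric.ball x s)

/-- `σ` is a doubling measure: `σ(B(x,2r)) ≤ C₀ σ(B(x,r))` for all `x`, `r > 0`. -/
def Doubling (n : ℕ) (σ : Measure (Euc n)) : Prop :=
  ∃ C₀ : ℝ, 0 < C₀ ∧ ∀ (x : Euc n) (r : ℝ), 0 < r →
    σ (Metric.ball x (2 * r)) ≤ ENNReal.ofReal C₀ * σ (Metric.ball x r)

/-- The pair `(k,σ)` satisfies the logarithmic bounded oscillation (LBO) condition: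
`sup_{y ∈ B(x,r)} k̄(r)(y) ≤ A inf_{y ∈ B(x,r)} k̄(r)(y)` uniformly in `x`, `r`. -/
def LBO (n : ℕ) (σ : Measure (Euc n)) (k : ℝ → ℝ) : Prop :=
  ∃ A : ℝ, 0 < A ∧ ∀ (x : Euc n) (r : ℝ), 0 < r →
    ∀ y ∈ Metric.ball x r, ∀ z ∈ Metric.ball x r,
      kbar n σ k r y ≤ ENNReal.ofReal A * kbar n σ k r z

variable {n : ℕ}

lemma myFloorDiv (a : ℝ) (d : ℤ) (hd : 0 < d) : ⌊a / d⌋ = ⌊a⌋ / d := by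
  have hd' : (0:ℝ) < d := by exact_mod_cast hd
  rw [Int.floor_eq_iff]
  constructor
  · rw [le_div_iff₀ hd']
    calc ((⌊a⌋ / d : ℤ) : ℝ) * d = ((⌊a⌋ / d * d : ℤ) : ℝ) := by push_cast; ring
    _ ≤ (⌊a⌋ : ℝ) := by exact_mod_cast Int.ediv_mul_le ⌊a⌋ (by omega)
    _ ≤ a := Int.floor_le a
  · rw [div_lt_iff₀ hd']
    have h1 : a < (⌊a⌋ : ℝ) + 1 := Int.lt_floor_add_one a
    have h2 : ⌊a⌋ + 1 ≤ (⌊a⌋ / d + 1) * d := by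
      have := Int.lt_ediv_add_one_mul_self ⌊a⌋ hd
      omega
    calc a < ((⌊a⌋ + 1 : ℤ) : ℝ) := by push_cast; linarith
    _ ≤ (((⌊a⌋ / d + 1) * d : ℤ) : ℝ) := by exact_mod_cast h2
    _ = ((⌊a⌋ / d : ℤ) + 1) * d := by push_cast; ring

def idx (j : ℤ) (x : Euc n) : Fin n → ℤ := fun i => ⌊(2:ℝ) ^ j * x i⌋

lemma mem_dCube_iff {q : DIdx n} {x : Euc n} :
    x ∈ dCube n q ↔ ∀ i, ⌊(2:ℝ) ^ q.1 * x i⌋ = q.2 i := by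
  constructor
  · intro h i
    exact Int.floor_eq_iff.mpr ⟨(h i).1, (h i).2⟩
  · intro h i
    rw [← h i]
    exact ⟨Int.floor_le _, Int.lt_floor_add_one _⟩

lemma mem_dCube_idx (j : ℤ) (x : Euc n) : x ∈ dCube n (j, idx j x) := by
  rw [mem_dCube_iff]; intro i; rfl

lemma eq_idx_of_mem {q : DIdx n} {x : Euc n} (h : x ∈ dCube n q) : q.2 = idx q.1 x := by
  funext i
  exact ((mem_dCube_iff.mp h) i).symm

lemma dCube_nested {j j' : ℤ} (h : j ≤ j') (x : Euc n) :
    dCube n (j', idx j' x) ⊆ dCube n (j, idx j x) := by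
  intro y hy
  rw [mem_dCube_iff] at hy ⊢
  intro i
  have hyx : ⌊(2:ℝ) ^ j' * y i⌋ = ⌊(2:ℝ) ^ j' * x i⌋ := hy i
  have key : ∀ z : ℝ, ⌊(2:ℝ) ^ j * z⌋ = ⌊(2:ℝ) ^ j' * z⌋ / (2 ^ (j' - j).toNat : ℤ) := by
    intro z
    have hpos : (0:ℤ) < 2 ^ (j' - j).toNat := by positivity
    rw [← myFloorDiv _ _ hpos]
    congr 1
    have hc : ((2 ^ (j' - j).toNat : ℤ) : ℝ) = (2:ℝ) ^ (j' - j) := by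
      push_cast
      rw [← zpow_natCast]
      congr 1
      omega
    rw [hc, _root_.eq_div_iff (by positivity : ((2:ℝ) ^ (j' - j) ≠ 0)), mul_right_comm, ← zpow_add₀ (by norm_num : (2:ℝ) ≠ 0)]
    congr 2
    omega
  show ⌊(2:ℝ) ^ j * y i⌋ = idx j x i
  rw [key, show idx j x i = ⌊(2:ℝ) ^ j * x i⌋ from rfl, key, hyx]

lemma level_le_of_subset (hn : 0 < n) {q q' : DIdx n}
    (h : dCube n q' ⊆ dCube n q) : q.1 ≤ q'.1 := by
  set j := q'.1
  -- points p c := ((m i + c) * 2^(-j))_i lie in dCube q' for c ∈ [0,1)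
  have hp : ∀ c : ℝ, 0 ≤ c → c < 1 →
      (WithLp.toLp 2 (fun i => ((q'.2 i : ℝ) + c) * (2:ℝ) ^ (-j)) : Euc n) ∈ dCube n q' := by
    intro c hc0 hc1
    intro i
    simp only [WithLp.ofLp_toLp]
    have : (2:ℝ) ^ j * (((q'.2 i : ℝ) + c) * (2:ℝ) ^ (-j)) = (q'.2 i : ℝ) + c := by
      rw [mul_comm, mul_assoc, ← zpow_add₀ (by norm_num : (2:ℝ) ≠ 0)]
      simp
    rw [this]
    constructor <;> linarith
  have h0 := h (hp 0 le_rfl one_pos)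
  have hhalf := h (hp (1/2) (by norm_num) (by norm_num))
  set i : Fin n := ⟨0, hn⟩
  have e1 := (h0 i).1
  have e2 := (hhalf i).2
  simp only [WithLp.ofLp_toLp] at e1 e2
  have : (2:ℝ) ^ q.1 * (((q'.2 i : ℝ) + 1/2) * (2:ℝ) ^ (-j)) -
      (2:ℝ) ^ q.1 * (((q'.2 i : ℝ) + 0) * (2:ℝ) ^ (-j)) = (1/2) * (2:ℝ) ^ (q.1 - j) := by
    rw [zpow_sub₀ (by norm_num : (2:ℝ) ≠ 0)]
    rw [zpow_neg]
    ring
  have hlt : (1/2 : ℝ) * (2:ℝ) ^ (q.1 - j) < 1 := by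
    rw [← this]
    linarith
  have : (2:ℝ) ^ (q.1 - j) < 2 ^ (1:ℤ) := by
    rw [zpow_one]; linarith
  have := (zpow_lt_zpow_iff_right₀ (by norm_num : (1:ℝ) < 2)).mp this
  omega

lemma abs_coord_le_dist (x y : Euc n) (i : Fin n) : |x i - y i| ≤ dist x y := by
  rw [EuclideanSpace.dist_eq]
  have h1 : |x i - y i| = Real.sqrt ((x i - y i)^2) := (Real.sqrt_sq_eq_abs _).symm
  rw [h1]
  apply Real.sqrt_le_sqrt
  have : dist (x i) (y i) ^ 2 = (x i - y i)^2 := by rw [Real.dist_eq, sq_abs]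
  rw [← this]
  exact Finset.single_le_sum (f := fun i => dist (x i) (y i) ^ 2)
    (fun _ _ => sq_nonneg _) (Finset.mem_univ i)

lemma dist_le_of_coords {x y : Euc n} {d : ℝ} (hd : 0 ≤ d) (h : ∀ i, |x i - y i| ≤ d) :
    dist x y ≤ Real.sqrt n * d := by
  rw [EuclideanSpace.dist_eq]
  have hsum : ∑ i, dist (x i) (y i) ^ 2 ≤ n * d^2 := by
    have : ∀ i ∈ Finset.univ, dist (x i) (y i) ^ 2 ≤ d^2 := by
      intro i _
      rw [Real.dist_eq]
      exact pow_le_pow_left₀ (abs_nonneg _) (h i) 2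
    calc ∑ i, dist (x i) (y i) ^ 2 ≤ ∑ _i : Fin n, d^2 := Finset.sum_le_sum this
      _ = n * d^2 := by simp [Finset.sum_const, nsmul_eq_mul]
  calc Real.sqrt (∑ i, dist (x i) (y i) ^ 2) ≤ Real.sqrt (n * d^2) := Real.sqrt_le_sqrt hsum
    _ = Real.sqrt n * d := by rw [Real.sqrt_mul (by positivity), Real.sqrt_sq hd]

lemma sqrtn_lt_pow : Real.sqrt n < 2 ^ n := by
  have h1 : (n:ℝ) < (2:ℝ)^n * (2:ℝ)^n := by
    have : (n:ℕ) < 2^n := Nat.lt_two_pow_self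
    have h2 : (n:ℝ) < (2:ℝ)^n := by exact_mod_cast this
    have h3 : (1:ℝ) ≤ (2:ℝ)^n := one_le_pow₀ (by norm_num)
    nlinarith
  have := Real.sqrt_lt_sqrt (by positivity) h1
  rwa [Real.sqrt_mul_self (by positivity)] at this

lemma cube_subset_ball (j : ℤ) (x : Euc n) :
    dCube n (j, idx j x) ⊆ Metric.ball x ((2:ℝ)^n * (2:ℝ)^(-j)) := by
  intro y hy
  have hco : ∀ i, |y i - x i| ≤ (2:ℝ)^(-j) := by
    intro i
    have h1 := (hy i).1
    have h2 := (hy i).2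
    have h3 := (mem_dCube_idx j x i).1
    have h4 := (mem_dCube_idx j x i).2
    simp only at h1 h2 h3 h4
    have : |(2:ℝ)^j * y i - (2:ℝ)^j * x i| ≤ 1 := by
      rw [abs_le]; constructor <;> linarith
    rw [← mul_sub, abs_mul, abs_of_pos (by positivity : (0:ℝ) < (2:ℝ)^j)] at this
    have hz : (0:ℝ) < (2:ℝ)^j := by positivity
    rw [zpow_neg, inv_eq_one_div, le_div_iff₀ hz]
    linarith [this]
  have := dist_le_of_coords (by positivity) hco
  rw [Metric.mem_ball]
  calc dist y x ≤ Real.sqrt n * (2:ℝ)^(-j) := this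
  _ < 2^n * (2:ℝ)^(-j) := by
      apply mul_lt_mul_of_pos_right sqrtn_lt_pow (by positivity)

def cCenter (j : ℤ) (m : Fin n → ℤ) : Euc n := WithLp.toLp 2 (fun i => ((m i : ℝ) + 1/2) * (2:ℝ)^(-j))

lemma ball_center_subset_cube (j : ℤ) (m : Fin n → ℤ) :
    Metric.ball (cCenter j m) ((2:ℝ)^(-j)/2) ⊆ dCube n (j, m) := by
  intro y hy
  intro i
  have hc := abs_coord_le_dist y (cCenter j m) i
  rw [Metric.mem_ball] at hy
  have hco : |y i - cCenter j m i| < (2:ℝ)^(-j)/2 := lt_of_le_of_lt hc hy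
  have hcen : cCenter j m i = ((m i : ℝ) + 1/2) * (2:ℝ)^(-j) := rfl
  have hz : (0:ℝ) < (2:ℝ)^j := by positivity
  have hkey : |(2:ℝ)^j * y i - ((m i : ℝ) + 1/2)| < 1/2 := by
    have hinv : (2:ℝ)^j * (2:ℝ)^(-j) = 1 := by
      rw [← zpow_add₀ (by norm_num : (2:ℝ) ≠ 0)]; simp
    have : (2:ℝ)^j * y i - ((m i : ℝ) + 1/2) = (2:ℝ)^j * (y i - cCenter j m i) := by
      rw [hcen]
      linear_combination ((m i : ℝ) + 1/2) * hinv
    rw [this, abs_mul, abs_of_pos hz]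
    calc (2:ℝ)^j * |y i - cCenter j m i| < (2:ℝ)^j * ((2:ℝ)^(-j)/2) := by
          exact mul_lt_mul_of_pos_left hco hz
      _ = 1/2 := by
          rw [zpow_neg]
          field_simp
  rw [abs_lt] at hkey
  constructor
  · simp only; linarith [hkey.1]
  · simp only; linarith [hkey.2]

lemma dist_center_le {j : ℤ} {x : Euc n} (hx : x ∈ dCube n (j, idx j x)) :
    dist x (cCenter j (idx j x)) ≤ Real.sqrt n * ((2:ℝ)^(-j)/2) := by
  apply dist_le_of_coords (by positivity)
  intro i
  have h1 := (hx i).1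
  have h2 := (hx i).2
  simp only at h1 h2
  have hz : (0:ℝ) < (2:ℝ)^j := by positivity
  have hkey : |(2:ℝ)^j * x i - ((idx j x i : ℝ) + 1/2)| ≤ 1/2 := by
    rw [abs_le]; constructor <;> linarith
  have heq : x i - cCenter j (idx j x) i = ((2:ℝ)^j * x i - ((idx j x i : ℝ) + 1/2)) * (2:ℝ)^(-j) := by
    have hinv : (2:ℝ)^j * (2:ℝ)^(-j) = 1 := by
      rw [← zpow_add₀ (by norm_num : (2:ℝ) ≠ 0)]; simp
    show x i - ((idx j x i : ℝ) + 1/2) * (2:ℝ)^(-j) = _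
    linear_combination (-(x i)) * hinv
  rw [heq, abs_mul, abs_of_pos (by positivity : (0:ℝ) < (2:ℝ)^(-j))]
  calc |(2:ℝ)^j * x i - ((idx j x i : ℝ) + 1/2)| * (2:ℝ)^(-j) ≤ (1/2) * (2:ℝ)^(-j) := by
        apply mul_le_mul_of_nonneg_right hkey (by positivity)
    _ = (2:ℝ)^(-j)/2 := by ring

lemma doubling_pow {σ : Measure (Euc n)} {c : ℝ≥0∞}
    (hd : ∀ (x : Euc n) (r : ℝ), 0 < r → σ (Metric.ball x (2 * r)) ≤ c * σ (Metric.ball x r))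
    (N : ℕ) (x : Euc n) (r : ℝ) (hr : 0 < r) :
    σ (Metric.ball x ((2:ℝ)^N * r)) ≤ c^N * σ (Metric.ball x r) := by
  induction N with
  | zero => simp
  | succ N ih =>
    have h1 : (2:ℝ)^(N+1) * r = 2 * ((2:ℝ)^N * r) := by ring
    rw [h1]
    calc σ (Metric.ball x (2 * ((2:ℝ)^N * r))) ≤ c * σ (Metric.ball x ((2:ℝ)^N * r)) :=
          hd x _ (by positivity)
      _ ≤ c * (c^N * σ (Metric.ball x r)) := by exact mul_le_mul_right ih c
      _ = c^(N+1) * σ (Metric.ball x r) := by rw [pow_succ]; ring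

lemma meas_cube_le {σ : Measure (Euc n)} {c : ℝ≥0∞}
    (hd : ∀ (x : Euc n) (r : ℝ), 0 < r → σ (Metric.ball x (2 * r)) ≤ c * σ (Metric.ball x r))
    (j : ℤ) (x : Euc n) :
    σ (dCube n (j, idx j x)) ≤ c^n * σ (Metric.ball x ((2:ℝ)^(-j))) := by
  calc σ (dCube n (j, idx j x)) ≤ σ (Metric.ball x ((2:ℝ)^n * (2:ℝ)^(-j))) :=
        measure_mono (cube_subset_ball j x)
    _ ≤ c^n * σ (Metric.ball x ((2:ℝ)^(-j))) := doubling_pow hd n x _ (by positivity)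

lemma meas_ball_le {σ : Measure (Euc n)} {c : ℝ≥0∞}
    (hd : ∀ (x : Euc n) (r : ℝ), 0 < r → σ (Metric.ball x (2 * r)) ≤ c * σ (Metric.ball x r))
    (j : ℤ) (x : Euc n) :
    σ (Metric.ball x ((2:ℝ)^(-j))) ≤ c^(n+2) * σ (dCube n (j, idx j x)) := by
  set m := idx j x
  have hsub : Metric.ball x ((2:ℝ)^(-j)) ⊆
      Metric.ball (cCenter j m) ((2:ℝ)^(n+2) * ((2:ℝ)^(-j)/2)) := by
    apply Metric.ball_subset_ball'
    have hdist := dist_center_le (mem_dCube_idx j x)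
    have hsq : Real.sqrt n < 2^n := sqrtn_lt_pow
    have hp : (0:ℝ) < (2:ℝ)^(-j) := by positivity
    have h1 : Real.sqrt n * ((2:ℝ)^(-j)/2) ≤ 2^n * (2:ℝ)^(-j) := by
      nlinarith [Real.sqrt_nonneg (n:ℝ)]
    have h2 : (2:ℝ)^(-j) + 2^n * (2:ℝ)^(-j) ≤ (2:ℝ)^(n+2) * ((2:ℝ)^(-j)/2) := by
      have hpow : (1:ℝ) + 2^n ≤ (2:ℝ)^(n+2)/2 := by
        have h3 : (1:ℝ) ≤ (2:ℝ)^n := one_le_pow₀ (by norm_num)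
        have : (2:ℝ)^(n+2) = 4 * 2^n := by ring
        rw [this]
        linarith
      nlinarith
    linarith
  calc σ (Metric.ball x ((2:ℝ)^(-j)))
      ≤ σ (Metric.ball (cCenter j m) ((2:ℝ)^(n+2) * ((2:ℝ)^(-j)/2))) := measure_mono hsub
    _ ≤ c^(n+2) * σ (Metric.ball (cCenter j m) ((2:ℝ)^(-j)/2)) :=
        doubling_pow hd (n+2) _ _ (by positivity)
    _ ≤ c^(n+2) * σ (dCube n (j, m)) :=
        mul_le_mul_right (measure_mono (ball_center_subset_cube j m)) _

section Integral

variable {k : ℝ → ℝ} {σ : Measure (Euc n)}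

lemma piece_upper (hk0 : ∀ r ∈ Ioi (0:ℝ), 0 ≤ k r) (hmono : AntitoneOn k (Ioi (0:ℝ)))
    (x : Euc n) {a : ℝ} (ha : 0 < a) :
    ∫⁻ s in Ico a (2*a), ENNReal.ofReal (k s / s) * σ (Metric.ball x s) ≤
      ENNReal.ofReal (k a) * σ (Metric.ball x (2*a)) := by
  have hbd : ∀ s ∈ Ico a (2*a), ENNReal.ofReal (k s / s) * σ (Metric.ball x s) ≤
      ENNReal.ofReal (k a / a) * σ (Metric.ball x (2*a)) := by
    intro s hs
    have hs0 : 0 < s := lt_of_lt_of_le ha hs.1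
    have hks : k s ≤ k a := hmono (mem_Ioi.mpr ha) (mem_Ioi.mpr hs0) hs.1
    have hdiv : k s / s ≤ k a / a :=
      div_le_div₀ (le_trans (hk0 s (mem_Ioi.mpr hs0)) hks) hks ha hs.1
    exact mul_le_mul' (ENNReal.ofReal_le_ofReal hdiv)
      (measure_mono (Metric.ball_subset_ball (le_of_lt hs.2)))
  calc ∫⁻ s in Ico a (2*a), ENNReal.ofReal (k s / s) * σ (Metric.ball x s)
      ≤ ∫⁻ _s in Ico a (2*a), ENNReal.ofReal (k a / a) * σ (Metric.ball x (2*a)) :=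
        setLIntegral_mono' measurableSet_Ico hbd
    _ = ENNReal.ofReal (k a / a) * σ (Metric.ball x (2*a)) * ENNReal.ofReal a := by
        rw [setLIntegral_const, Real.volume_Ico]
        congr 1
        rw [show 2*a - a = a by ring]
    _ = ENNReal.ofReal (k a) * σ (Metric.ball x (2*a)) := by
        rw [mul_right_comm, ← ENNReal.ofReal_mul (div_nonneg (hk0 a (mem_Ioi.mpr ha)) ha.le)]
        rw [div_mul_cancel₀ _ (ne_of_gt ha)]

lemma piece_lower (hk0 : ∀ r ∈ Ioi (0:ℝ), 0 ≤ k r) (hmono : AntitoneOn k (Ioi (0:ℝ)))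
    (x : Euc n) {a : ℝ} (ha : 0 < a) :
    ENNReal.ofReal (k (2*a)) * σ (Metric.ball x a) ≤
      2 * ∫⁻ s in Ico a (2*a), ENNReal.ofReal (k s / s) * σ (Metric.ball x s) := by
  have h2a : (0:ℝ) < 2*a := by linarith
  have hbd : ∀ s ∈ Ico a (2*a), ENNReal.ofReal (k (2*a) / (2*a)) * σ (Metric.ball x a) ≤
      ENNReal.ofReal (k s / s) * σ (Metric.ball x s) := by
    intro s hs
    have hs0 : 0 < s := lt_of_lt_of_le ha hs.1
    have hks : k (2*a) ≤ k s := hmono (mem_Ioi.mpr hs0) (mem_Ioi.mpr h2a) (le_of_lt hs.2)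
    have hdiv : k (2*a) / (2*a) ≤ k s / s :=
      div_le_div₀ (le_trans (hk0 _ (mem_Ioi.mpr h2a)) hks) hks hs0 (le_of_lt hs.2)
    exact mul_le_mul' (ENNReal.ofReal_le_ofReal hdiv)
      (measure_mono (Metric.ball_subset_ball hs.1))
  have hstep : ENNReal.ofReal (k (2*a) / (2*a)) * σ (Metric.ball x a) * ENNReal.ofReal a ≤
      ∫⁻ s in Ico a (2*a), ENNReal.ofReal (k s / s) * σ (Metric.ball x s) := by
    calc ENNReal.ofReal (k (2*a) / (2*a)) * σ (Metric.ball x a) * ENNReal.ofReal a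
        = ∫⁻ _s in Ico a (2*a), ENNReal.ofReal (k (2*a) / (2*a)) * σ (Metric.ball x a) := by
          rw [setLIntegral_const, Real.volume_Ico]
          congr 2
          rw [show 2*a - a = a by ring]
      _ ≤ _ := setLIntegral_mono' measurableSet_Ico hbd
  have hid : ENNReal.ofReal (k (2*a)) * σ (Metric.ball x a) =
      2 * (ENNReal.ofReal (k (2*a) / (2*a)) * σ (Metric.ball x a) * ENNReal.ofReal a) := by
    have hge : 0 ≤ k (2*a) := hk0 _ (mem_Ioi.mpr h2a)
    rw [mul_right_comm (ENNReal.ofReal _), ← ENNReal.ofReal_mul (div_nonneg hge h2a.le)]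
    rw [show k (2*a) / (2*a) * a = k (2*a) / 2 by field_simp]
    have h2 : (2:ℝ≥0∞) * ENNReal.ofReal (k (2*a)/2) = ENNReal.ofReal (k (2*a)) := by
      rw [show (2:ℝ≥0∞) = ENNReal.ofReal 2 by norm_num, ← ENNReal.ofReal_mul (by norm_num)]
      ring_nf
    rw [← mul_assoc, h2]
  rw [hid]
  exact mul_le_mul_right hstep 2

end Integral

lemma iUnion_Ico_eq_Ioo {r : ℝ} (hr : 0 < r) :
    (⋃ t : ℕ, Ico (r/2^(t+1)) (r/2^t)) = Ioo (0:ℝ) r := by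
  ext s
  simp only [mem_iUnion, mem_Ico, mem_Ioo]
  constructor
  · rintro ⟨t, h1, h2⟩
    constructor
    · exact lt_of_lt_of_le (by positivity) h1
    · calc s < r/2^t := h2
        _ ≤ r/1 := div_le_div_of_nonneg_left hr.le one_pos (one_le_pow₀ (by norm_num))
        _ = r := by norm_num
  · rintro ⟨hs0, hsr⟩
    have hex : ∃ t : ℕ, r/2^(t+1) ≤ s := by
      obtain ⟨t, ht⟩ := pow_unbounded_of_one_lt (r/s) (by norm_num : (1:ℝ) < 2)
      refine ⟨t, ?_⟩
      rw [div_le_iff₀ (by positivity)]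
      rw [div_lt_iff₀ hs0] at ht
      calc r ≤ 2^t * s := ht.le
        _ ≤ 2^(t+1) * s := by
          apply mul_le_mul_of_nonneg_right _ hs0.le
          apply pow_le_pow_right₀ (by norm_num)
          omega
        _ = s * 2^(t+1) := by ring
    refine ⟨Nat.find hex, Nat.find_spec hex, ?_⟩
    rcases Nat.eq_zero_or_pos (Nat.find hex) with h0 | hpos
    · rw [h0]; simpa using hsr
    · obtain ⟨u, hu⟩ : ∃ u, Nat.find hex = u + 1 := ⟨Nat.find hex - 1, by omega⟩
      have := Nat.find_min hex (m := u) (by omega)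
      rw [hu]
      push_neg at this
      exact this

lemma pieces_disjoint {r : ℝ} (hr : 0 < r) :
    Pairwise (Function.onFun Disjoint (fun t : ℕ => Ico (r/2^(t+1)) (r/2^t))) := by
  intro t u htu
  wlog h : t < u generalizing t u
  · exact (this htu.symm (by omega)).symm
  rw [Function.onFun, Set.disjoint_left]
  intro s hs hs'
  have h1 : r/2^u ≤ r/2^(t+1) := by
    apply div_le_div_of_nonneg_left hr.le (by positivity)
    exact pow_le_pow_right₀ (by norm_num) (by omega)
  have := hs.1
  have := hs'.2
  linarith

lemma integral_split {f : ℝ → ℝ≥0∞} {r : ℝ} (hr : 0 < r) :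
    ∫⁻ s in Ioo (0:ℝ) r, f s = ∑' t : ℕ, ∫⁻ s in Ico (r/2^(t+1)) (r/2^t), f s := by
  rw [← iUnion_Ico_eq_Ioo hr]
  rw [Measure.restrict_iUnion (pieces_disjoint hr) (fun t => measurableSet_Ico)]
  exact lintegral_sum_measure f _


lemma Kbar_eq (hn : 0 < n) (σ : Measure (Euc n)) (K : DIdx n → ℝ≥0∞) (Q : DIdx n)
    {x : Euc n} (hx : x ∈ dCube n Q) :
    Kbar n σ K Q x = (σ (dCube n Q))⁻¹ *
      ∑' t : ℕ, K (Q.1 + t, idx (Q.1 + t) x) * σ (dCube n (Q.1 + t, idx (Q.1 + t) x)) := by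
  have hQ : dCube n Q = dCube n (Q.1, idx Q.1 x) := by
    have := eq_idx_of_mem hx
    rw [show Q = (Q.1, Q.2) from rfl, this]
  set f : DIdx n → ℝ≥0∞ :=
    fun q' => if dCube n q' ⊆ dCube n Q then K q' * σ (dCube n q') * ch n q' x else 0 with hf
  set ι : ℕ → DIdx n := fun t => (Q.1 + t, idx (Q.1 + t) x) with hι
  have hinj : Function.Injective ι := by
    intro t u htu
    have : Q.1 + (t:ℤ) = Q.1 + u := congrArg Prod.fst htu
    omega
  have hsupp : Function.support f ⊆ Set.range ι := by
    intro q' hq'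
    rw [Function.mem_support, hf] at hq'
    beta_reduce at hq'
    by_cases hsub : dCube n q' ⊆ dCube n Q
    · rw [if_pos hsub] at hq'
      have hxq' : x ∈ dCube n q' := by
        by_contra hxn
        apply hq'
        rw [ch, Set.indicator_of_notMem hxn, mul_zero]
      have hlev : Q.1 ≤ q'.1 := level_le_of_subset hn hsub
      refine ⟨(q'.1 - Q.1).toNat, ?_⟩
      rw [hι]
      have h1 : Q.1 + ((q'.1 - Q.1).toNat : ℤ) = q'.1 := by omega
      have h2 := eq_idx_of_mem hxq'
      rw [show q' = (q'.1, q'.2) from rfl]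
      simp only
      exact Prod.ext (by omega) (by rw [h1, ← h2])
    · rw [if_neg hsub] at hq'
      exact absurd rfl hq'
  have hsum := hinj.tsum_eq hsupp
  rw [Kbar, ← hsum]
  congr 1
  apply tsum_congr
  intro t
  rw [hf]
  beta_reduce
  have hsub : dCube n (ι t) ⊆ dCube n Q := by
    rw [hQ, hι]
    exact dCube_nested (by omega) x
  rw [if_pos hsub]
  rw [ch, Set.indicator_of_mem (mem_dCube_idx _ x), Pi.one_apply, mul_one]

lemma inv_flip {a b e : ℝ≥0∞} (he0 : e ≠ 0) (het : e ≠ ⊤) (h : a ≤ e * b) :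
    b⁻¹ ≤ e * a⁻¹ := by
  have h1 : (e * b)⁻¹ ≤ a⁻¹ := ENNReal.inv_le_inv' h
  have h2 : (e * b)⁻¹ = e⁻¹ * b⁻¹ := ENNReal.mul_inv (Or.inl he0) (Or.inl het)
  rw [h2] at h1
  calc b⁻¹ = e * (e⁻¹ * b⁻¹) := by
        rw [← mul_assoc, ENNReal.mul_inv_cancel he0 het, one_mul]
    _ ≤ e * a⁻¹ := mul_le_mul_right h1 e


/-- Let `k : (0,∞) → [0,∞)` be nonincreasing and lower semicontinuous,
`σ` a locally finite doubling measure on `ℝ^n`, and `K(Q) = k(r_Q)`. Then there is `C > 0`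
such that for every dyadic cube `Q` and `x ∈ Q`,
`(1/C) k̄(r_Q)(x) ≤ K̄(Q)(x) ≤ C k̄(r_Q)(x)`. -/
theorem stmt13 (n : ℕ) (hn : 0 < n) (k : ℝ → ℝ)
    (hk0 : ∀ r ∈ Ioi (0:ℝ), 0 ≤ k r) (hmono : AntitoneOn k (Ioi (0:ℝ)))
    (hlsc : LowerSemicontinuousOn k (Ioi (0:ℝ)))
    (σ : Measure (Euc n)) [IsLocallyFiniteMeasure σ] (hσ : Doubling n σ) :
    ∃ C : ℝ, 0 < C ∧ ∀ Q : DIdx n, ∀ x ∈ dCube n Q,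
      ENNReal.ofReal C⁻¹ * kbar n σ k (sideLen n Q) x ≤
          Kbar n σ (fun q => ENNReal.ofReal (k (sideLen n q))) Q x ∧
        Kbar n σ (fun q => ENNReal.ofReal (k (sideLen n q))) Q x ≤
          ENNReal.ofReal C * kbar n σ k (sideLen n Q) x := by
  obtain ⟨C₀, hC₀pos, hdb⟩ := hσ
  set C₁ : ℝ := max C₀ 1 with hC₁def
  have hC₁ : 1 ≤ C₁ := le_max_right _ _
  set c : ℝ≥0∞ := ENNReal.ofReal C₁ with hcdef
  have hc1 : 1 ≤ c := by
    rw [hcdef, ← ENNReal.ofReal_one]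
    exact ENNReal.ofReal_le_ofReal hC₁
  have hc0 : c ≠ 0 := by
    intro h; rw [h] at hc1; exact absurd hc1 (by simp)
  have hctop : c ≠ ⊤ := ENNReal.ofReal_ne_top
  have hd : ∀ (y : Euc n) (ρ : ℝ), 0 < ρ →
      σ (Metric.ball y (2 * ρ)) ≤ c * σ (Metric.ball y ρ) := by
    intro y ρ hρ
    calc σ (Metric.ball y (2 * ρ)) ≤ ENNReal.ofReal C₀ * σ (Metric.ball y ρ) := hdb y ρ hρ
      _ ≤ c * σ (Metric.ball y ρ) := by
        apply mul_le_mul_left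
        exact ENNReal.ofReal_le_ofReal (le_max_left _ _)
  refine ⟨2 * C₁ ^ (2*n+3), by positivity, ?_⟩
  intro Q x hx
  set j₀ : ℤ := Q.1 with hj₀
  set r : ℝ := (2:ℝ)^(-j₀) with hrdef
  have hr : 0 < r := by positivity
  have hsl : sideLen n Q = r := rfl
  have hρ : ∀ t : ℕ, (2:ℝ)^(-(j₀+(t:ℤ))) = r/2^t := by
    intro t
    rw [hrdef, neg_add, zpow_add₀ (by norm_num : (2:ℝ) ≠ 0), div_eq_mul_inv]
    congr 1
    rw [zpow_neg, zpow_natCast]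
  have hρpos : ∀ t : ℕ, 0 < r/2^t := fun t => by positivity
  -- the three quantities
  set Sterm : ℕ → ℝ≥0∞ := fun t =>
    ENNReal.ofReal (k ((2:ℝ)^(-(j₀+(t:ℤ))))) * σ (Metric.ball x ((2:ℝ)^(-(j₀+(t:ℤ))))) with hSterm
  set S : ℝ≥0∞ := ∑' t : ℕ, Sterm t with hS
  set Dterm : ℕ → ℝ≥0∞ := fun t =>
    ENNReal.ofReal (k ((2:ℝ)^(-(j₀+(t:ℤ))))) * σ (dCube n (j₀+(t:ℤ), idx (j₀+(t:ℤ)) x)) with hDterm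
  set D : ℝ≥0∞ := ∑' t : ℕ, Dterm t with hD
  set P : ℕ → ℝ≥0∞ := fun t =>
    ∫⁻ s in Ico (r/2^(t+1)) (r/2^t), ENNReal.ofReal (k s / s) * σ (Metric.ball x s) with hP
  set I : ℝ≥0∞ := ∫⁻ s in Ioo (0:ℝ) r, ENNReal.ofReal (k s / s) * σ (Metric.ball x s) with hI
  have hIsplit : I = ∑' t : ℕ, P t := integral_split hr
  -- Kbar and kbar in terms of D, I
  have hKbar : Kbar n σ (fun q => ENNReal.ofReal (k (sideLen n q))) Q x =
      (σ (dCube n Q))⁻¹ * D := by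
    rw [Kbar_eq hn σ _ Q hx, hD]
    congr 1
  have hkbar : kbar n σ k (sideLen n Q) x = (σ (Metric.ball x r))⁻¹ * I := by
    rw [hsl]; rfl
  -- comparison of I and S
  have hIS : I ≤ c * S := by
    rw [hIsplit]
    calc ∑' t, P t ≤ ∑' t, c * Sterm (t+1) := by
          apply ENNReal.tsum_le_tsum
          intro t
          have ha : 0 < r/2^(t+1) := hρpos (t+1)
          have h2a : r/2^t = 2 * (r/2^(t+1)) := by
            rw [pow_succ]; field_simp
          calc P t ≤ ENNReal.ofReal (k (r/2^(t+1))) *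
                σ (Metric.ball x (2 * (r/2^(t+1)))) := by
                rw [hP]
                beta_reduce
                rw [h2a]
                exact piece_upper hk0 hmono x ha
            _ ≤ ENNReal.ofReal (k (r/2^(t+1))) * (c * σ (Metric.ball x (r/2^(t+1)))) :=
                mul_le_mul_right (hd x _ ha) _
            _ = c * Sterm (t+1) := by
                rw [hSterm]
                beta_reduce
                rw [hρ (t+1)]
                push_cast
                ring
      _ = c * ∑' t, Sterm (t+1) := ENNReal.tsum_mul_left
      _ ≤ c * S := by
          apply mul_le_mul_right
          rw [hS]
          exact tsum_comp_le_tsum_of_injective (fun a b hab => by omega) Sterm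
  have hSI : S ≤ 2 * c * I := by
    rw [hIsplit, hS]
    calc ∑' t, Sterm t ≤ ∑' t, 2 * c * P t := by
          apply ENNReal.tsum_le_tsum
          intro t
          have ha : 0 < r/2^(t+1) := hρpos (t+1)
          have h2a : r/2^t = 2 * (r/2^(t+1)) := by
            rw [pow_succ]; field_simp
          calc Sterm t = ENNReal.ofReal (k (r/2^t)) * σ (Metric.ball x (r/2^t)) := by
                rw [hSterm]; beta_reduce; rw [hρ t]
            _ ≤ ENNReal.ofReal (k (r/2^t)) * (c * σ (Metric.ball x (r/2^(t+1)))) := by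
                apply mul_le_mul_right
                rw [h2a]
                exact hd x _ ha
            _ = c * (ENNReal.ofReal (k (2*(r/2^(t+1)))) * σ (Metric.ball x (r/2^(t+1)))) := by
                rw [← h2a]; ring
            _ ≤ c * (2 * P t) := by
                apply mul_le_mul_right
                rw [hP]
                beta_reduce
                rw [h2a]
                exact piece_lower hk0 hmono x ha
            _ = 2 * c * P t := by ring
      _ = 2 * c * ∑' t, P t := ENNReal.tsum_mul_left
  -- comparison of D and S
  have hDS : D ≤ c^n * S := by
    rw [hD, hS]
    calc ∑' t, Dterm t ≤ ∑' t, c^n * Sterm t := by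
          apply ENNReal.tsum_le_tsum
          intro t
          rw [hDterm, hSterm]
          beta_reduce
          calc ENNReal.ofReal (k ((2:ℝ)^(-(j₀+(t:ℤ))))) * σ (dCube n (j₀+(t:ℤ), idx (j₀+(t:ℤ)) x))
              ≤ ENNReal.ofReal (k ((2:ℝ)^(-(j₀+(t:ℤ))))) *
                (c^n * σ (Metric.ball x ((2:ℝ)^(-(j₀+(t:ℤ)))))) :=
                mul_le_mul_right (meas_cube_le hd _ x) _
            _ = c^n * (ENNReal.ofReal (k ((2:ℝ)^(-(j₀+(t:ℤ))))) *
                σ (Metric.ball x ((2:ℝ)^(-(j₀+(t:ℤ)))))) := by ring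
      _ = c^n * ∑' t, Sterm t := ENNReal.tsum_mul_left
  have hSD : S ≤ c^(n+2) * D := by
    rw [hD, hS]
    calc ∑' t, Sterm t ≤ ∑' t, c^(n+2) * Dterm t := by
          apply ENNReal.tsum_le_tsum
          intro t
          rw [hDterm, hSterm]
          beta_reduce
          calc ENNReal.ofReal (k ((2:ℝ)^(-(j₀+(t:ℤ))))) * σ (Metric.ball x ((2:ℝ)^(-(j₀+(t:ℤ)))))
              ≤ ENNReal.ofReal (k ((2:ℝ)^(-(j₀+(t:ℤ))))) *
                (c^(n+2) * σ (dCube n (j₀+(t:ℤ), idx (j₀+(t:ℤ)) x))) :=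
                mul_le_mul_right (meas_ball_le hd _ x) _
            _ = c^(n+2) * (ENNReal.ofReal (k ((2:ℝ)^(-(j₀+(t:ℤ))))) *
                σ (dCube n (j₀+(t:ℤ), idx (j₀+(t:ℤ)) x))) := by ring
      _ = c^(n+2) * ∑' t, Dterm t := ENNReal.tsum_mul_left
  -- comparison of σ Q and σ (ball x r)
  have hQcube : dCube n Q = dCube n (j₀, idx j₀ x) := by
    have := eq_idx_of_mem hx
    rw [show Q = (Q.1, Q.2) from rfl, this]
  have hQB : σ (dCube n Q) ≤ c^n * σ (Metric.ball x r) := by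
    rw [hQcube, hrdef]
    exact meas_cube_le hd j₀ x
  have hBQ : σ (Metric.ball x r) ≤ c^(n+2) * σ (dCube n Q) := by
    rw [hQcube, hrdef]
    exact meas_ball_le hd j₀ x
  -- inverse comparisons
  have hQinv : (σ (dCube n Q))⁻¹ ≤ c^(n+2) * (σ (Metric.ball x r))⁻¹ :=
    inv_flip (pow_ne_zero _ hc0) (ENNReal.pow_ne_top hctop) hBQ
  have hBinv : (σ (Metric.ball x r))⁻¹ ≤ c^n * (σ (dCube n Q))⁻¹ :=
    inv_flip (pow_ne_zero _ hc0) (ENNReal.pow_ne_top hctop) hQB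
  -- final constant
  have hCof : ENNReal.ofReal (2 * C₁ ^ (2*n+3)) = 2 * c^(2*n+3) := by
    rw [ENNReal.ofReal_mul (by norm_num), ENNReal.ofReal_pow (by linarith), ENNReal.ofReal_ofNat]
  -- upper bound
  have hupper : Kbar n σ (fun q => ENNReal.ofReal (k (sideLen n q))) Q x ≤
      ENNReal.ofReal (2 * C₁ ^ (2*n+3)) * kbar n σ k (sideLen n Q) x := by
    rw [hKbar, hkbar, hCof]
    calc (σ (dCube n Q))⁻¹ * D
        ≤ (c^(n+2) * (σ (Metric.ball x r))⁻¹) * (c^n * (2 * c * I)) := by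
          apply mul_le_mul' hQinv
          calc D ≤ c^n * S := hDS
            _ ≤ c^n * (2 * c * I) := mul_le_mul_right hSI _
      _ = 2 * c^(2*n+3) * ((σ (Metric.ball x r))⁻¹ * I) := by ring
  -- lower bound auxiliary
  have hlower' : kbar n σ k (sideLen n Q) x ≤
      ENNReal.ofReal (2 * C₁ ^ (2*n+3)) *
        Kbar n σ (fun q => ENNReal.ofReal (k (sideLen n q))) Q x := by
    rw [hKbar, hkbar, hCof]
    calc (σ (Metric.ball x r))⁻¹ * I
        ≤ (c^n * (σ (dCube n Q))⁻¹) * (c * (c^(n+2) * D)) := by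
          apply mul_le_mul' hBinv
          calc I ≤ c * S := hIS
            _ ≤ c * (c^(n+2) * D) := mul_le_mul_right hSD _
      _ = c^(2*n+3) * ((σ (dCube n Q))⁻¹ * D) := by ring
      _ ≤ 2 * c^(2*n+3) * ((σ (dCube n Q))⁻¹ * D) := by
          apply mul_le_mul_left
          calc c^(2*n+3) = 1 * c^(2*n+3) := by rw [one_mul]
            _ ≤ 2 * c^(2*n+3) := by
                apply mul_le_mul_left
                norm_num
  refine ⟨?_, hupper⟩
  have hCpos : (0:ℝ) < 2 * C₁ ^ (2*n+3) := by positivity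
  calc ENNReal.ofReal (2 * C₁ ^ (2*n+3))⁻¹ * kbar n σ k (sideLen n Q) x
      ≤ ENNReal.ofReal (2 * C₁ ^ (2*n+3))⁻¹ *
        (ENNReal.ofReal (2 * C₁ ^ (2*n+3)) *
          Kbar n σ (fun q => ENNReal.ofReal (k (sideLen n q))) Q x) :=
        mul_le_mul_right hlower' _
    _ = (ENNReal.ofReal (2 * C₁ ^ (2*n+3))⁻¹ * ENNReal.ofReal (2 * C₁ ^ (2*n+3))) *
        Kbar n σ (fun q => ENNReal.ofReal (k (sideLen n q))) Q x := by rw [mul_assoc]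
    _ = Kbar n σ (fun q => ENNReal.ofReal (k (sideLen n q))) Q x := by
        rw [← ENNReal.ofReal_mul (by positivity), inv_mul_cancel₀ (ne_of_gt hCpos),
          ENNReal.ofReal_one, one_mul]
end
end

section
/- Let k : (0,∞) → [0,∞) be nonincreasing and lower semicontinuous, let 1 < p < ∞, and let σ be a locally finite positive Borel measure on ℝ^n satisfying a doubling condition. Set K(Q) = k(r_Q) for Q ∈ 𝒟. Then there exist constants c, C > 0 such that for every locally finite positive Borel measure μ on ℝ^n and every x ∈ ℝ^n, ∑_{Q∈𝒟} k(c r_Q) σ(Q) χ_Q(x) (∫_Q K̄(Q)(y) dμ(y))^{p'−1} ≤ C 𝒲_{k,σ}[μ](x). -/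
open MeasureTheory ENNReal Set
open scoped Classical ENNReal NNReal

noncomputable section

/-- The continuous Wolff potential
`𝒲_{k,σ}[μ](x) = ∫_0^∞ k(r) σ(B(x,r)) (∫_{B(x,r)} k̄(r)(y) dμ(y))^{p'-1} dr/r`. -/
def WolffC (n : ℕ) (σ : Measure (Euc n)) (k : ℝ → ℝ) (p : ℝ) (μ : Measure (Euc n))
    (x : Euc n) : ℝ≥0∞ :=
  ∫⁻ r in Ioi (0:ℝ), ENNReal.ofReal (k r / r) * σ (Metric.ball x r) *
    (∫⁻ y in Metric.ball x r, kbar n σ k r y ∂μ) ^ (p / (p - 1) - 1)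

/-! ### Auxiliary lemmas on dyadic cubes -/

/-- index of the cube of scale `j` containing `x` -/
def dIdxOf (n : ℕ) (j : ℤ) (x : Euc n) : DIdx n := (j, fun t => ⌊(2:ℝ) ^ j * x t⌋)

lemma mem_dIdxOf (n : ℕ) (j : ℤ) (x : Euc n) : x ∈ dCube n (dIdxOf n j x) :=
  fun _ => ⟨Int.floor_le _, Int.lt_floor_add_one _⟩

lemma eq_dIdxOf_of_mem {n : ℕ} {q : DIdx n} {x : Euc n} (h : x ∈ dCube n q) :
    q = dIdxOf n q.1 x := by
  obtain ⟨j, m⟩ := q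
  unfold dIdxOf
  simp only [Prod.mk.injEq, true_and]
  funext t
  exact ((Int.floor_eq_iff).2 ⟨(h t).1, (h t).2⟩).symm

lemma dIdxOf_injective (n : ℕ) (x : Euc n) : Function.Injective (fun j => dIdxOf n j x) :=
  fun _ _ h => congrArg Prod.fst h

lemma two_zpow_pos (j : ℤ) : (0:ℝ) < (2:ℝ) ^ j := zpow_pos (by norm_num) _

lemma two_zpow_mul_neg (j : ℤ) : (2:ℝ)^j * (2:ℝ)^(-j) = 1 := by
  rw [← zpow_add₀ (two_ne_zero) j (-j), add_neg_cancel, zpow_zero]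

lemma abs_sub_lt_of_mem {n : ℕ} {q : DIdx n} {y w : Euc n}
    (hy : y ∈ dCube n q) (hw : w ∈ dCube n q) (t : Fin n) :
    |y t - w t| < (2:ℝ) ^ (-q.1) := by
  have h2 : (0:ℝ) < (2:ℝ) ^ q.1 := two_zpow_pos _
  have h1 : |(2:ℝ) ^ q.1 * y t - (2:ℝ) ^ q.1 * w t| < 1 := by
    rw [abs_sub_lt_iff]
    constructor <;> nlinarith [(hy t).1, (hy t).2, (hw t).1, (hw t).2]
  have h3 : |y t - w t| * (2:ℝ) ^ q.1 < 1 := by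
    calc |y t - w t| * (2:ℝ) ^ q.1 = |(2:ℝ) ^ q.1 * y t - (2:ℝ) ^ q.1 * w t| := by
          rw [← mul_sub, abs_mul, abs_of_pos h2]; ring
      _ < 1 := h1
  rw [zpow_neg, inv_eq_one_div, lt_div_iff₀ h2]
  linarith

lemma dist_lt_of_mem {n : ℕ} (hn : 0 < n) {q : DIdx n} {y w : Euc n}
    (hy : y ∈ dCube n q) (hw : w ∈ dCube n q) :
    dist y w < (n:ℝ) * (2:ℝ) ^ (-q.1) := by
  have hR : (0:ℝ) < (2:ℝ) ^ (-q.1) := two_zpow_pos _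
  have hn1 : (1:ℝ) ≤ (n:ℝ) := by exact_mod_cast hn
  rw [EuclideanSpace.dist_eq]
  have hsum : ∑ t : Fin n, dist (y t) (w t) ^ 2 < (n:ℝ) * ((2:ℝ) ^ (-q.1))^2 := by
    have : ∑ t : Fin n, dist (y t) (w t) ^ 2 < ∑ _t : Fin n, ((2:ℝ) ^ (-q.1))^2 := by
      apply Finset.sum_lt_sum_of_nonempty
      · exact Finset.univ_nonempty_iff.2 ⟨⟨0, hn⟩⟩
      · intro t _
        have := abs_sub_lt_of_mem hy hw t
        have habs : dist (y t) (w t) = |y t - w t| := Real.dist_eq _ _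
        nlinarith [abs_nonneg (y t - w t)]
    simpa [Finset.sum_const, Finset.card_univ, nsmul_eq_mul] using this
  have h2 : (n:ℝ) * ((2:ℝ) ^ (-q.1))^2 ≤ ((n:ℝ) * (2:ℝ) ^ (-q.1))^2 := by nlinarith
  have hpos : (0:ℝ) < (n:ℝ) * (2:ℝ) ^ (-q.1) := by positivity
  rw [show √(∑ t : Fin n, dist (y t) (w t) ^ 2) < (n:ℝ) * (2:ℝ)^(-q.1) ↔ _ from Real.sqrt_lt' hpos]
  nlinarith

/-- center of a dyadic cube -/
def zc (n : ℕ) (q : DIdx n) : Euc n := WithLp.toLp 2 (fun t => (2:ℝ)^(-q.1) * (q.2 t) + (2:ℝ)^(-q.1)/2)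

lemma coord_dist_le {n : ℕ} (y z : Euc n) (t : Fin n) : |y t - z t| ≤ dist y z := by
  rw [EuclideanSpace.dist_eq]
  have h1 : |y t - z t| = √(dist (y t) (z t) ^ 2) := by
    rw [Real.sqrt_sq_eq_abs, Real.dist_eq]; rw [abs_abs]
  rw [h1]
  apply Real.sqrt_le_sqrt
  exact Finset.single_le_sum (f := fun i => dist (y i) (z i) ^ 2)
    (fun i _ => sq_nonneg _) (Finset.mem_univ t)

lemma ball_subset_dCube {n : ℕ} (q : DIdx n) :
    Metric.ball (zc n q) ((2:ℝ)^(-q.1)/2) ⊆ dCube n q := by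
  intro w hw
  intro t
  have hc : |w t - zc n q t| ≤ dist w (zc n q) := coord_dist_le _ _ _
  have hd : dist w (zc n q) < (2:ℝ)^(-q.1)/2 := Metric.mem_ball.1 hw
  have hz : zc n q t = (2:ℝ)^(-q.1) * (q.2 t) + (2:ℝ)^(-q.1)/2 := rfl
  have h2 : (0:ℝ) < (2:ℝ) ^ q.1 := two_zpow_pos _
  have hmul := two_zpow_mul_neg q.1
  have habs : |w t - zc n q t| < (2:ℝ)^(-q.1)/2 := lt_of_le_of_lt hc hd
  have e1 : (2:ℝ)^q.1 * w t - (q.2 t:ℝ) - 1/2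
      = (2:ℝ)^q.1 * (w t - ((2:ℝ)^(-q.1) * (q.2 t:ℝ) + (2:ℝ)^(-q.1)/2)) := by
    linear_combination ((q.2 t : ℝ) + 1/2) * hmul
  have e2 : |(2:ℝ)^q.1 * w t - (q.2 t:ℝ) - 1/2| < 1/2 := by
    rw [e1, abs_mul, abs_of_pos h2]
    have h3 : (2:ℝ)^q.1 * |w t - zc n q t| < (2:ℝ)^q.1 * ((2:ℝ)^(-q.1)/2) :=
      mul_lt_mul_of_pos_left habs h2
    have h4 : (2:ℝ)^q.1 * ((2:ℝ)^(-q.1)/2) = 1/2 := by linear_combination hmul / 2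
    rw [hz] at h3
    linarith
  rw [abs_lt] at e2
  constructor <;> [linarith [e2.1]; linarith [e2.2]]

lemma dist_zc_le {n : ℕ} {q : DIdx n} {y : Euc n} (hy : y ∈ dCube n q) :
    dist y (zc n q) ≤ (n:ℝ) * ((2:ℝ)^(-q.1)/2) := by
  have h2 : (0:ℝ) < (2:ℝ) ^ q.1 := two_zpow_pos _
  have hmul := two_zpow_mul_neg q.1
  have hR : (0:ℝ) < (2:ℝ) ^ (-q.1) := two_zpow_pos _
  have hcoord : ∀ t : Fin n, |y t - zc n q t| ≤ (2:ℝ)^(-q.1)/2 := by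
    intro t
    have h1 := (hy t).1
    have h2' := (hy t).2
    have hz : zc n q t = (2:ℝ)^(-q.1) * (q.2 t) + (2:ℝ)^(-q.1)/2 := rfl
    have e1 : (2:ℝ)^q.1 * y t - (q.2 t:ℝ) - 1/2
        = (2:ℝ)^q.1 * (y t - ((2:ℝ)^(-q.1) * (q.2 t:ℝ) + (2:ℝ)^(-q.1)/2)) := by
      linear_combination ((q.2 t : ℝ) + 1/2) * hmul
    have e3 : |(2:ℝ)^q.1 * y t - (q.2 t:ℝ) - 1/2| ≤ 1/2 :=
      abs_le.2 ⟨by linarith, by linarith⟩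
    rw [e1, abs_mul, abs_of_pos h2] at e3
    have e4 : (2:ℝ)^q.1 * |y t - ((2:ℝ)^(-q.1) * (q.2 t:ℝ) + (2:ℝ)^(-q.1)/2)| * (2:ℝ)^(-q.1)
        ≤ 1/2 * (2:ℝ)^(-q.1) := mul_le_mul_of_nonneg_right e3 hR.le
    have e5 : (2:ℝ)^q.1 * |y t - ((2:ℝ)^(-q.1) * (q.2 t:ℝ) + (2:ℝ)^(-q.1)/2)| * (2:ℝ)^(-q.1)
        = |y t - ((2:ℝ)^(-q.1) * (q.2 t:ℝ) + (2:ℝ)^(-q.1)/2)| := by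
      linear_combination |y t - ((2:ℝ)^(-q.1) * (q.2 t:ℝ) + (2:ℝ)^(-q.1)/2)| * hmul
    rw [hz]
    linarith [e4, e5.symm.le, e5.le]
  rw [EuclideanSpace.dist_eq]
  have hsum : ∑ t : Fin n, dist (y t) (zc n q t) ^ 2 ≤ (n:ℝ) * ((2:ℝ)^(-q.1)/2)^2 := by
    calc ∑ t : Fin n, dist (y t) (zc n q t) ^ 2 ≤ ∑ _t : Fin n, ((2:ℝ)^(-q.1)/2)^2 := by
          apply Finset.sum_le_sum
          intro t _
          have := hcoord t
          rw [Real.dist_eq]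
          nlinarith [abs_nonneg (y t - zc n q t)]
      _ = (n:ℝ) * ((2:ℝ)^(-q.1)/2)^2 := by
          simp [Finset.sum_const, Finset.card_univ, nsmul_eq_mul]
  have hn0 : (0:ℝ) ≤ (n:ℝ) := Nat.cast_nonneg n
  calc √(∑ t : Fin n, dist (y t) (zc n q t) ^ 2) ≤ √((n:ℝ) * ((2:ℝ)^(-q.1)/2)^2) :=
        Real.sqrt_le_sqrt hsum
    _ ≤ (n:ℝ) * ((2:ℝ)^(-q.1)/2) := by
        rw [show (n:ℝ) * ((2:ℝ)^(-q.1)/2)^2 = ((n:ℝ)*((2:ℝ)^(-q.1)/2)) * ((2:ℝ)^(-q.1)/2) by ring]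
        rcases Nat.eq_zero_or_pos n with h | h
        · simp [h]
        · have hn1 : (1:ℝ) ≤ (n:ℝ) := by exact_mod_cast h
          have : ((n:ℝ)*((2:ℝ)^(-q.1)/2)) * ((2:ℝ)^(-q.1)/2) ≤ ((n:ℝ)*((2:ℝ)^(-q.1)/2))^2 := by
            nlinarith
          calc √(((n:ℝ)*((2:ℝ)^(-q.1)/2)) * ((2:ℝ)^(-q.1)/2)) ≤ √(((n:ℝ)*((2:ℝ)^(-q.1)/2))^2) :=
                Real.sqrt_le_sqrt this
            _ = (n:ℝ)*((2:ℝ)^(-q.1)/2) := by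
                rw [Real.sqrt_sq (by positivity)]

lemma not_subset_of_scale_lt {n : ℕ} (hn : 0 < n) {i j : ℤ} (hij : i < j)
    (m m' : Fin n → ℤ) : ¬ (dCube n (i, m) ⊆ dCube n (j, m')) := by
  intro hsub
  set t0 : Fin n := ⟨0, hn⟩
  set y1 : Euc n := WithLp.toLp 2 (fun t => (2:ℝ)^(-i) * m t) with hy1def
  set y2 : Euc n := WithLp.toLp 2 (fun t => if t = t0 then (2:ℝ)^(-i) * m t + (2:ℝ)^(-i)/2 else (2:ℝ)^(-i) * m t)
    with hy2def
  have hmul := two_zpow_mul_neg i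
  have h2i : (0:ℝ) < (2:ℝ) ^ (i:ℤ) := two_zpow_pos _
  have hRi : (0:ℝ) < (2:ℝ) ^ (-i) := two_zpow_pos _
  have hy1 : y1 ∈ dCube n (i, m) := by
    intro t
    have : (2:ℝ)^(i:ℤ) * y1 t = m t := by
      show (2:ℝ)^(i:ℤ) * ((2:ℝ)^(-i) * m t) = m t
      rw [← mul_assoc, hmul, one_mul]
    constructor <;> simp [this]
  have hy2 : y2 ∈ dCube n (i, m) := by
    intro t
    by_cases ht : t = t0
    · have : (2:ℝ)^(i:ℤ) * y2 t = m t + 1/2 := by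
        show (2:ℝ)^(i:ℤ) * (if t = t0 then (2:ℝ)^(-i) * m t + (2:ℝ)^(-i)/2 else (2:ℝ)^(-i) * m t)
          = m t + 1/2
        rw [if_pos ht]; linear_combination ((m t : ℝ) + 1/2) * hmul
      rw [this]
      constructor <;> [linarith; linarith]
    · have : (2:ℝ)^(i:ℤ) * y2 t = m t := by
        show (2:ℝ)^(i:ℤ) * (if t = t0 then (2:ℝ)^(-i) * m t + (2:ℝ)^(-i)/2 else (2:ℝ)^(-i) * m t)
          = m t
        rw [if_neg ht, ← mul_assoc, hmul, one_mul]
      constructor <;> simp [this]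
  have h1 := hsub hy1 t0
  have h2 := hsub hy2 t0
  have hdiff : (2:ℝ)^(j:ℤ) * y2 t0 - (2:ℝ)^(j:ℤ) * y1 t0 = (2:ℝ)^(j-i)/2 := by
    have hy2t0 : y2 t0 = (2:ℝ)^(-i) * m t0 + (2:ℝ)^(-i)/2 := by
      show (if t0 = t0 then (2:ℝ)^(-i) * m t0 + (2:ℝ)^(-i)/2 else (2:ℝ)^(-i) * m t0) = _
      rw [if_pos rfl]
    have hy1t0 : y1 t0 = (2:ℝ)^(-i) * m t0 := rfl
    rw [hy2t0, hy1t0]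
    have : (2:ℝ)^(j:ℤ) * (2:ℝ)^(-i) = (2:ℝ)^(j-i) := by
      rw [← zpow_add₀ (two_ne_zero : (2:ℝ) ≠ 0)]; ring_nf
    linear_combination this / 2
  have hge1 : (1:ℝ) ≤ (2:ℝ)^(j-i)/2 := by
    have h1le : (1:ℤ) ≤ j - i := by omega
    have : (2:ℝ)^(1:ℤ) ≤ (2:ℝ)^(j-i) := by
      apply zpow_le_zpow_right₀ (by norm_num) h1le
    simp at this
    linarith
  have : (2:ℝ)^(j:ℤ) * y2 t0 - (2:ℝ)^(j:ℤ) * y1 t0 < 1 := by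
    have a1 := h1.1; have a2 := h2.2
    linarith
  linarith

lemma measurableSet_dCube (n : ℕ) (q : DIdx n) : MeasurableSet (dCube n q) := by
  have heq : dCube n q = ⋂ t : Fin n,
      (fun x : Euc n => (2:ℝ)^q.1 * x t) ⁻¹' (Ico ((q.2 t:ℝ)) ((q.2 t:ℝ)+1)) := by
    ext x
    simp only [dCube, Set.mem_setOf_eq, Set.mem_iInter, Set.mem_preimage, Set.mem_Ico]
  rw [heq]
  apply MeasurableSet.iInter
  intro t
  have hm : Measurable fun x : Euc n => (2:ℝ)^q.1 * x t :=
    (by fun_prop : Continuous fun x : Euc n => (2:ℝ)^q.1 * x t).measurable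
  exact hm measurableSet_Ico

lemma doubling_iter {n : ℕ} {σ : Measure (Euc n)} {C₀ : ℝ}
    (hC : ∀ (x : Euc n) (r : ℝ), 0 < r →
      σ (Metric.ball x (2 * r)) ≤ ENNReal.ofReal C₀ * σ (Metric.ball x r))
    (x : Euc n) {ρ : ℝ} (hρ : 0 < ρ) (e : ℕ) :
    σ (Metric.ball x ((2:ℝ)^e * ρ)) ≤ ENNReal.ofReal C₀ ^ e * σ (Metric.ball x ρ) := by
  induction e with
  | zero => simp
  | succ e ih =>
    have h1 : (2:ℝ)^(e+1) * ρ = 2 * ((2:ℝ)^e * ρ) := by ring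
    calc σ (Metric.ball x ((2:ℝ)^(e+1) * ρ)) = σ (Metric.ball x (2 * ((2:ℝ)^e * ρ))) := by
          rw [h1]
      _ ≤ ENNReal.ofReal C₀ * σ (Metric.ball x ((2:ℝ)^e * ρ)) := hC _ _ (by positivity)
      _ ≤ ENNReal.ofReal C₀ * (ENNReal.ofReal C₀ ^ e * σ (Metric.ball x ρ)) :=
          mul_le_mul_right ih _
      _ = ENNReal.ofReal C₀ ^ (e+1) * σ (Metric.ball x ρ) := by ring

lemma ball_measure_le {n : ℕ} {σ : Measure (Euc n)} {C₀ : ℝ}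
    (hC : ∀ (x : Euc n) (r : ℝ), 0 < r →
      σ (Metric.ball x (2 * r)) ≤ ENNReal.ofReal C₀ * σ (Metric.ball x r))
    {y z : Euc n} {s ρ : ℝ} (hρ : 0 < ρ) (e : ℕ)
    (hsub : Metric.ball y s ⊆ Metric.ball z ((2:ℝ)^e * ρ)) :
    σ (Metric.ball y s) ≤ ENNReal.ofReal C₀ ^ e * σ (Metric.ball z ρ) :=
  le_trans (measure_mono hsub) (doubling_iter hC z hρ e)

lemma intervalLB {n : ℕ} (σ : Measure (Euc n)) (k : ℝ → ℝ)
    (hk0 : ∀ r ∈ Ioi (0:ℝ), 0 ≤ k r) (hmono : AntitoneOn k (Ioi (0:ℝ)))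
    (y : Euc n) {R : ℝ} (hR : 0 < R) :
    ENNReal.ofReal (k R) * σ (Metric.ball y (R/2)) ≤
      ENNReal.ofReal 2 * ∫⁻ s in Ioc (R/2) R, ENNReal.ofReal (k s / s) * σ (Metric.ball y s) := by
  have hconst : ∫⁻ s in Ioc (R/2) R,
      (ENNReal.ofReal (k R / R) * σ (Metric.ball y (R/2)) : ℝ≥0∞) =
      ENNReal.ofReal (k R / R) * σ (Metric.ball y (R/2)) * ENNReal.ofReal (R - R/2) := by
    rw [setLIntegral_const, Real.volume_Ioc]
  have hmo : ∫⁻ s in Ioc (R/2) R, (ENNReal.ofReal (k R / R) * σ (Metric.ball y (R/2)) : ℝ≥0∞) ≤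
      ∫⁻ s in Ioc (R/2) R, ENNReal.ofReal (k s / s) * σ (Metric.ball y s) := by
    apply lintegral_mono_ae
    rw [ae_restrict_iff' measurableSet_Ioc]
    apply ae_of_all
    intro s hs
    have hs0 : 0 < s := lt_trans (by positivity) hs.1
    have hks : k R ≤ k s := hmono (mem_Ioi.2 hs0) (mem_Ioi.2 hR) hs.2
    have hkR0 : 0 ≤ k R := hk0 R hR
    have hdiv : k R / R ≤ k s / s := by
      calc k R / R ≤ k R / s := by
            apply div_le_div_of_nonneg_left hkR0 hs0 hs.2
        _ ≤ k s / s := by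
            apply div_le_div_of_nonneg_right hks hs0.le
    exact mul_le_mul' (ENNReal.ofReal_le_ofReal hdiv)
      (measure_mono (Metric.ball_subset_ball hs.1.le))
  have harith : (2:ℝ) * ((k R / R) * (R - R/2)) = k R := by
    field_simp; ring
  calc ENNReal.ofReal (k R) * σ (Metric.ball y (R/2))
      = ENNReal.ofReal 2 * (ENNReal.ofReal (k R / R) * σ (Metric.ball y (R/2)) *
          ENNReal.ofReal (R - R/2)) := by
        rw [show ENNReal.ofReal 2 * (ENNReal.ofReal (k R / R) * σ (Metric.ball y (R/2)) *
            ENNReal.ofReal (R - R/2)) =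
            (ENNReal.ofReal 2 * (ENNReal.ofReal (k R / R) * ENNReal.ofReal (R - R/2))) *
              σ (Metric.ball y (R/2)) by ring]
        rw [← ENNReal.ofReal_mul (div_nonneg (hk0 R hR) hR.le), ← ENNReal.ofReal_mul (by norm_num),
          harith]
    _ ≤ ENNReal.ofReal 2 * ∫⁻ s in Ioc (R/2) R, ENNReal.ofReal (k s / s) * σ (Metric.ball y s) := by
        rw [← hconst]
        exact mul_le_mul_right hmo _

lemma zpow_neg_succ (i : ℤ) : (2:ℝ)^(-(i+1)) = (2:ℝ)^(-i)/2 := by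
  rw [neg_add, zpow_add₀ (two_ne_zero : (2:ℝ) ≠ 0)]
  norm_num
  ring

lemma zpow_neg_antitone {i i' : ℤ} (h : i ≤ i') : (2:ℝ)^(-i') ≤ (2:ℝ)^(-i) :=
  zpow_le_zpow_right₀ (by norm_num) (by omega)

lemma dyadic_Ioc_disjoint {i i' : ℤ} (h : i ≠ i') :
    Disjoint (Ioc ((2:ℝ)^(-i)/2) ((2:ℝ)^(-i))) (Ioc ((2:ℝ)^(-i')/2) ((2:ℝ)^(-i'))) := by
  wlog hlt : i < i' generalizing i i'
  · exact (this h.symm (by omega)).symm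
  rw [Set.disjoint_left]
  rintro s ⟨hs1, _⟩ ⟨_, hs2'⟩
  have : (2:ℝ)^(-i') ≤ (2:ℝ)^(-(i+1)) := zpow_neg_antitone (by omega)
  rw [zpow_neg_succ] at this
  linarith

lemma scaled_Ioc_disjoint {a b : ℝ} (ha : 0 < a) (hb : b ≤ 2*a) {i i' : ℤ} (h : i ≠ i') :
    Disjoint (Ioc (a*(2:ℝ)^(-i)) (b*(2:ℝ)^(-i))) (Ioc (a*(2:ℝ)^(-i')) (b*(2:ℝ)^(-i'))) := by
  wlog hlt : i < i' generalizing i i'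
  · exact (this h.symm (by omega)).symm
  rw [Set.disjoint_left]
  rintro s ⟨hs1, _⟩ ⟨hs1', hs2'⟩
  have h1 : (2:ℝ)^(-i') ≤ (2:ℝ)^(-(i+1)) := zpow_neg_antitone (by omega)
  rw [zpow_neg_succ] at h1
  have hp1 : (0:ℝ) < (2:ℝ)^(-i) := two_zpow_pos _
  have hp2 : (0:ℝ) < (2:ℝ)^(-i') := two_zpow_pos _
  have hbpos : 0 < b := by nlinarith
  nlinarith

lemma nat_le_two_pow (n : ℕ) : (n:ℝ) ≤ 2^n := by
  exact_mod_cast (Nat.lt_two_pow_self (n := n)).le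

set_option maxHeartbeats 2000000 in
/-- Let `k : (0,∞) → [0,∞)` be nonincreasing and lower semicontinuous,
`1 < p < ∞`, `σ` a locally finite doubling measure on `ℝ^n`, and `K(Q) = k(r_Q)`. Then
there are `c, C > 0` such that for every locally finite positive Borel measure `μ` and
every `x`,
`∑_Q k(c r_Q) σ(Q) χ_Q(x) (∫_Q K̄(Q)(y) dμ(y))^{p'-1} ≤ C 𝒲_{k,σ}[μ](x)`. -/
theorem stmt16 (n : ℕ) (hn : 0 < n) (k : ℝ → ℝ)
    (hk0 : ∀ r ∈ Ioi (0:ℝ), 0 ≤ k r) (hmono : AntitoneOn k (Ioi (0:ℝ)))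
    (hlsc : LowerSemicontinuousOn k (Ioi (0:ℝ)))
    (p : ℝ) (hp : 1 < p)
    (σ : Measure (Euc n)) [IsLocallyFiniteMeasure σ] (hσ : Doubling n σ) :
    ∃ c C : ℝ, 0 < c ∧ 0 < C ∧
      ∀ (μ : Measure (Euc n)), IsLocallyFiniteMeasure μ → ∀ x : Euc n,
        (∑' Q : DIdx n, ENNReal.ofReal (k (c * sideLen n Q)) * σ (dCube n Q) * ch n Q x *
            (∫⁻ y in dCube n Q,
                Kbar n σ (fun q => ENNReal.ofReal (k (sideLen n q))) Q y ∂μ) ^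
              (p / (p - 1) - 1)) ≤
          ENNReal.ofReal C * WolffC n σ k p μ x := by
  classical
  obtain ⟨C₀, hC₀pos, hC⟩ := hσ
  have hn1 : (1:ℝ) ≤ (n:ℝ) := by exact_mod_cast hn
  set d : ℕ := n + 1 with hdd
  set e : ℕ := n + 4 with hee
  set B : ℝ := C₀ ^ e * (2 * C₀ ^ d) with hBB
  have hBpos : 0 < B := by positivity
  have hp1 : (0:ℝ) < p - 1 := by linarith
  set δ : ℝ := p / (p - 1) - 1 with hδδ
  have hδpos : 0 < δ := by
    have h1 : 1 < p / (p - 1) := (one_lt_div hp1).2 (by linarith)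
    rw [hδδ]; linarith
  have hCpos : (0:ℝ) < 2 * B ^ δ := by positivity
  refine ⟨4 * (n:ℝ), 2 * B ^ δ, by linarith, hCpos, ?_⟩
  intro μ _ x
  set Kf : DIdx n → ℝ≥0∞ := fun q => ENNReal.ofReal (k (sideLen n q)) with hKf
  set F : ℝ → ℝ≥0∞ := fun r =>
    ENNReal.ofReal (k r / r) * σ (Metric.ball x r) *
      (∫⁻ y in Metric.ball x r, kbar n σ k r y ∂μ) ^ δ with hF
  have hW : WolffC n σ k p μ x = ∫⁻ r in Ioi (0:ℝ), F r := rfl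
  set f : DIdx n → ℝ≥0∞ := fun Q =>
    ENNReal.ofReal (k (4 * (n:ℝ) * sideLen n Q)) * σ (dCube n Q) * ch n Q x *
      (∫⁻ y in dCube n Q, Kbar n σ Kf Q y ∂μ) ^ δ with hf
  have hBne0 : ENNReal.ofReal B ≠ 0 := (ENNReal.ofReal_pos.2 hBpos).ne'
  -- the key per-scale estimate
  have key : ∀ j : ℤ, f (dIdxOf n j x) ≤ ENNReal.ofReal (2 * B ^ δ) *
      ∫⁻ r in Ioc ((2*(n:ℝ)) * (2:ℝ)^(-j)) ((4*(n:ℝ)) * (2:ℝ)^(-j)), F r := by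
    intro j
    set R : ℝ := (2:ℝ)^(-j) with hRdef
    have hR : 0 < R := two_zpow_pos _
    set qx : DIdx n := dIdxOf n j x with hqx
    have hxQ : x ∈ dCube n qx := mem_dIdxOf n j x
    have hside : sideLen n qx = R := rfl
    have hch : ch n qx x = 1 := by
      rw [ch, Set.indicator_of_mem hxQ]; rfl
    set M : ℝ≥0∞ := ∫⁻ y in dCube n qx, Kbar n σ Kf qx y ∂μ with hM
    set a : ℝ := k (4 * (n:ℝ) * R) with haa
    have h4nR : 0 < 4 * (n:ℝ) * R := by nlinarith
    have ha0 : 0 ≤ a := hk0 _ h4nR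
    -- pointwise comparison of dyadic and continuous kbar
    have A2 : ∀ r, r ∈ Ioc ((2*(n:ℝ))*R) ((4*(n:ℝ))*R) → ∀ y, y ∈ dCube n qx →
        (ENNReal.ofReal B)⁻¹ * Kbar n σ Kf qx y ≤ kbar n σ k r y := by
      intro r hr y hy
      have hrpos : 0 < r := lt_trans (by nlinarith) hr.1
      set Sy : ℝ≥0∞ := ∑' q' : DIdx n,
        (if dCube n q' ⊆ dCube n qx then Kf q' * σ (dCube n q') * ch n q' y else 0) with hSy
      set Iy : ℝ≥0∞ := ∫⁻ s in Ioo (0:ℝ) r, ENNReal.ofReal (k s / s) * σ (Metric.ball y s)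
        with hIydef
      set J : ℤ → Set ℝ := fun i =>
        if j ≤ i then Ioc ((2:ℝ)^(-i)/2) ((2:ℝ)^(-i)) else (∅:Set ℝ) with hJ
      -- (a) the dyadic sum is dominated by the radial integral
      have hre : Sy = ∑' i : ℤ,
          (if dCube n (dIdxOf n i y) ⊆ dCube n qx then
            Kf (dIdxOf n i y) * σ (dCube n (dIdxOf n i y)) * ch n (dIdxOf n i y) y else 0) := by
        rw [hSy]
        refine (Function.Injective.tsum_eq (dIdxOf_injective n y) ?_).symm
        intro q' hq'
        by_contra hran
        apply hq'
        have hyq : y ∉ dCube n q' := fun hmem => hran ⟨q'.1, (eq_dIdxOf_of_mem hmem).symm⟩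
        have hch0 : ch n q' y = 0 := by
          rw [ch, Set.indicator_of_notMem hyq]
        by_cases hsub : dCube n q' ⊆ dCube n qx <;> simp [hsub, hch0]
      have hterm : ∀ i : ℤ,
          (if dCube n (dIdxOf n i y) ⊆ dCube n qx then
            Kf (dIdxOf n i y) * σ (dCube n (dIdxOf n i y)) * ch n (dIdxOf n i y) y else 0)
          ≤ ENNReal.ofReal (2 * C₀ ^ d) *
            ∫⁻ s in J i, ENNReal.ofReal (k s / s) * σ (Metric.ball y s) := by
        intro i
        by_cases hji : j ≤ i
        · by_cases hsub : dCube n (dIdxOf n i y) ⊆ dCube n qx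
          · rw [if_pos hsub]
            have hyi : y ∈ dCube n (dIdxOf n i y) := mem_dIdxOf n i y
            have hchi : ch n (dIdxOf n i y) y = 1 := by
              rw [ch, Set.indicator_of_mem hyi]; rfl
            rw [hchi, mul_one]
            have hRi : (0:ℝ) < (2:ℝ)^(-i) := two_zpow_pos _
            have hcube_sub : dCube n (dIdxOf n i y) ⊆
                Metric.ball y ((2:ℝ)^d * ((2:ℝ)^(-i)/2)) := by
              intro w hw
              have hdw : dist w y < (n:ℝ) * (2:ℝ)^(-i) := dist_lt_of_mem hn hw hyi
              have h2d : (n:ℝ) * (2:ℝ)^(-i) ≤ (2:ℝ)^d * ((2:ℝ)^(-i)/2) := by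
                have h2 : (n:ℝ) ≤ 2^n := nat_le_two_pow n
                have hde : ((2:ℝ))^d = 2 * 2^n := by rw [hdd]; ring
                nlinarith
              exact Metric.mem_ball.2 (lt_of_lt_of_le hdw h2d)
            have hσc : σ (dCube n (dIdxOf n i y)) ≤
                ENNReal.ofReal C₀ ^ d * σ (Metric.ball y ((2:ℝ)^(-i)/2)) :=
              le_trans (measure_mono hcube_sub) (doubling_iter hC y (by positivity) d)
            have hKfi : Kf (dIdxOf n i y) = ENNReal.ofReal (k ((2:ℝ)^(-i))) := rfl
            calc Kf (dIdxOf n i y) * σ (dCube n (dIdxOf n i y))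
                ≤ ENNReal.ofReal (k ((2:ℝ)^(-i))) *
                    (ENNReal.ofReal C₀ ^ d * σ (Metric.ball y ((2:ℝ)^(-i)/2))) := by
                  rw [hKfi]; exact mul_le_mul_right hσc _
              _ = ENNReal.ofReal C₀ ^ d *
                    (ENNReal.ofReal (k ((2:ℝ)^(-i))) * σ (Metric.ball y ((2:ℝ)^(-i)/2))) := by
                  ring
              _ ≤ ENNReal.ofReal C₀ ^ d * (ENNReal.ofReal 2 *
                    ∫⁻ s in Ioc ((2:ℝ)^(-i)/2) ((2:ℝ)^(-i)),
                      ENNReal.ofReal (k s / s) * σ (Metric.ball y s)) :=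
                  mul_le_mul_right (intervalLB σ k hk0 hmono y hRi) _
              _ = ENNReal.ofReal (2 * C₀ ^ d) *
                    ∫⁻ s in J i, ENNReal.ofReal (k s / s) * σ (Metric.ball y s) := by
                  rw [hJ]
                  simp only [if_pos hji]
                  rw [ENNReal.ofReal_mul (by norm_num : (0:ℝ) ≤ 2),
                    ENNReal.ofReal_pow hC₀pos.le]
                  ring
          · rw [if_neg hsub]; exact zero_le
        · have hlt : i < j := by omega
          have hnots : ¬ (dCube n (dIdxOf n i y) ⊆ dCube n qx) :=
            not_subset_of_scale_lt hn hlt _ _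
          rw [if_neg hnots]; exact zero_le
      have hJm : ∀ i : ℤ, MeasurableSet (J i) := by
        intro i
        rw [hJ]
        by_cases hji : j ≤ i
        · simp only [if_pos hji]; exact measurableSet_Ioc
        · simp only [if_neg hji]; exact MeasurableSet.empty
      have hJd : Pairwise (Function.onFun Disjoint J) := by
        intro i i' hne
        show Disjoint (J i) (J i')
        rw [hJ]
        by_cases h1 : j ≤ i <;> by_cases h2 : j ≤ i' <;>
          simp only [if_pos, if_neg, h1, h2, if_true, if_false]
        · exact dyadic_Ioc_disjoint hne
        · exact Set.disjoint_empty _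
        · exact Set.empty_disjoint _
        · exact Set.empty_disjoint _
      have hJsub : (⋃ i : ℤ, J i) ⊆ Ioo (0:ℝ) r := by
        intro s hs
        simp only [Set.mem_iUnion] at hs
        obtain ⟨i, hsi⟩ := hs
        replace hsi : s ∈ (if j ≤ i then Ioc ((2:ℝ)^(-i)/2) ((2:ℝ)^(-i)) else (∅:Set ℝ)) := hsi
        by_cases hji : j ≤ i
        · rw [if_pos hji] at hsi
          have hRi : (0:ℝ) < (2:ℝ)^(-i) := two_zpow_pos _
          have h1 : (2:ℝ)^(-i) ≤ R := by rw [hRdef]; exact zpow_neg_antitone hji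
          constructor
          · linarith [hsi.1]
          · have h2 := hr.1
            nlinarith [hsi.2]
        · rw [if_neg hji] at hsi
          exact absurd hsi (Set.notMem_empty s)
      have hSle : Sy ≤ ENNReal.ofReal (2 * C₀ ^ d) * Iy := by
        calc Sy = _ := hre
          _ ≤ ∑' i : ℤ, ENNReal.ofReal (2 * C₀ ^ d) *
              ∫⁻ s in J i, ENNReal.ofReal (k s / s) * σ (Metric.ball y s) :=
            ENNReal.tsum_le_tsum hterm
          _ = ENNReal.ofReal (2 * C₀ ^ d) * ∑' i : ℤ,
              ∫⁻ s in J i, ENNReal.ofReal (k s / s) * σ (Metric.ball y s) :=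
            ENNReal.tsum_mul_left
          _ = ENNReal.ofReal (2 * C₀ ^ d) *
              ∫⁻ s in ⋃ i : ℤ, J i, ENNReal.ofReal (k s / s) * σ (Metric.ball y s) := by
            rw [lintegral_iUnion hJm hJd]
          _ ≤ ENNReal.ofReal (2 * C₀ ^ d) * Iy := by
            rw [hIydef]
            exact mul_le_mul_right
              (lintegral_mono' (Measure.restrict_mono hJsub le_rfl) le_rfl) _
      -- (b) ball measure controlled by cube measure
      have hbsub : Metric.ball y r ⊆ Metric.ball (zc n qx) ((2:ℝ)^e * (R/2)) := by
        intro w hw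
        have h1 : dist w y < r := Metric.mem_ball.1 hw
        have h2 : dist y (zc n qx) ≤ (n:ℝ) * (R/2) := dist_zc_le hy
        have h3 : dist w (zc n qx) < r + (n:ℝ)*(R/2) := by
          calc dist w (zc n qx) ≤ dist w y + dist y (zc n qx) := dist_triangle _ _ _
            _ < r + (n:ℝ)*(R/2) := by linarith
        have h4 : r + (n:ℝ)*(R/2) ≤ (2:ℝ)^e * (R/2) := by
          have h2n : (n:ℝ) ≤ 2^n := nat_le_two_pow n
          have hre2 : ((2:ℝ))^e = 16 * 2^n := by rw [hee]; ring
          have h5 := hr.2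
          nlinarith [mul_nonneg (sub_nonneg.2 h2n) hR.le]
        exact Metric.mem_ball.2 (lt_of_lt_of_le h3 h4)
      have hble : σ (Metric.ball y r) ≤ ENNReal.ofReal (C₀^e) * σ (dCube n qx) := by
        rw [ENNReal.ofReal_pow hC₀pos.le]
        calc σ (Metric.ball y r) ≤ ENNReal.ofReal C₀ ^ e * σ (Metric.ball (zc n qx) (R/2)) :=
              ball_measure_le hC (by positivity) e hbsub
          _ ≤ ENNReal.ofReal C₀ ^ e * σ (dCube n qx) :=
              mul_le_mul_right (measure_mono (ball_subset_dCube qx)) _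
      -- combine
      have hne1 : ENNReal.ofReal (2*C₀^d) ≠ 0 := by
        refine (ENNReal.ofReal_pos.2 ?_).ne'
        positivity
      have hne1' : ENNReal.ofReal (2*C₀^d) ≠ ⊤ := ENNReal.ofReal_ne_top
      have hne2 : ENNReal.ofReal (C₀^e) ≠ 0 := by
        refine (ENNReal.ofReal_pos.2 ?_).ne'
        positivity
      have hne2' : ENNReal.ofReal (C₀^e) ≠ ⊤ := ENNReal.ofReal_ne_top
      have hofB : ENNReal.ofReal B = ENNReal.ofReal (C₀^e) * ENNReal.ofReal (2*C₀^d) := by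
        rw [hBB, ← ENNReal.ofReal_mul (by positivity)]
      have h2 : (ENNReal.ofReal (2*C₀^d))⁻¹ * Sy ≤ Iy := by
        have h := mul_le_mul_right hSle (ENNReal.ofReal (2*C₀^d))⁻¹
        rwa [← mul_assoc, ENNReal.inv_mul_cancel hne1 hne1', one_mul] at h
      have h3 : (ENNReal.ofReal (C₀^e))⁻¹ * (σ (dCube n qx))⁻¹ ≤ (σ (Metric.ball y r))⁻¹ := by
        rw [← ENNReal.mul_inv (Or.inl hne2) (Or.inl hne2')]
        exact ENNReal.inv_le_inv.2 hble
      have hKbeq : Kbar n σ Kf qx y = (σ (dCube n qx))⁻¹ * Sy := rfl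
      have hkbeq : kbar n σ k r y = (σ (Metric.ball y r))⁻¹ * Iy := rfl
      rw [hKbeq, hkbeq]
      calc (ENNReal.ofReal B)⁻¹ * ((σ (dCube n qx))⁻¹ * Sy)
          = ((ENNReal.ofReal (C₀^e))⁻¹ * (σ (dCube n qx))⁻¹) *
            ((ENNReal.ofReal (2*C₀^d))⁻¹ * Sy) := by
            rw [hofB, ENNReal.mul_inv (Or.inl hne2) (Or.inl hne2')]; ring
        _ ≤ (σ (Metric.ball y r))⁻¹ * Iy := mul_le_mul' h3 h2
    -- A1: lower bound for F on the interval
    have A1 : ∀ r, r ∈ Ioc ((2*(n:ℝ))*R) ((4*(n:ℝ))*R) →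
        ENNReal.ofReal (a / (4*(n:ℝ)*R)) * σ (dCube n qx) *
          ((ENNReal.ofReal B)⁻¹ * M) ^ δ ≤ F r := by
      intro r hr
      have hrpos : 0 < r := lt_trans (by nlinarith) hr.1
      have f1 : ENNReal.ofReal (a / (4*(n:ℝ)*R)) ≤ ENNReal.ofReal (k r / r) := by
        apply ENNReal.ofReal_le_ofReal
        have hkr : a ≤ k r := hmono (mem_Ioi.2 hrpos) (mem_Ioi.2 h4nR) hr.2
        calc a / (4*(n:ℝ)*R) ≤ a / r := div_le_div_of_nonneg_left ha0 hrpos hr.2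
          _ ≤ k r / r := div_le_div_of_nonneg_right hkr hrpos.le
      have hQsub : dCube n qx ⊆ Metric.ball x r := by
        intro w hw
        have hdw : dist w x < (n:ℝ) * R := dist_lt_of_mem hn hw hxQ
        apply Metric.mem_ball.2
        nlinarith [hr.1]
      have f2 : σ (dCube n qx) ≤ σ (Metric.ball x r) := measure_mono hQsub
      have hinvBtop : (ENNReal.ofReal B)⁻¹ ≠ ⊤ := ENNReal.inv_ne_top.2 hBne0
      have f3 : (ENNReal.ofReal B)⁻¹ * M ≤ ∫⁻ y in Metric.ball x r, kbar n σ k r y ∂μ := by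
        calc (ENNReal.ofReal B)⁻¹ * M
            = ∫⁻ y in dCube n qx, (ENNReal.ofReal B)⁻¹ * Kbar n σ Kf qx y ∂μ := by
              rw [hM, lintegral_const_mul' _ _ hinvBtop]
          _ ≤ ∫⁻ y in dCube n qx, kbar n σ k r y ∂μ := by
              apply lintegral_mono_ae
              rw [ae_restrict_iff' (measurableSet_dCube n qx)]
              exact ae_of_all _ (A2 r hr)
          _ ≤ ∫⁻ y in Metric.ball x r, kbar n σ k r y ∂μ :=
              lintegral_mono' (Measure.restrict_mono hQsub le_rfl) le_rfl
      rw [hF]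
      exact mul_le_mul' (mul_le_mul' f1 f2) (ENNReal.rpow_le_rpow f3 hδpos.le)
    -- integrate A1 over the interval
    have hlow : ENNReal.ofReal (a / (4*(n:ℝ)*R)) * σ (dCube n qx) *
        ((ENNReal.ofReal B)⁻¹ * M) ^ δ * ENNReal.ofReal ((4*(n:ℝ))*R - (2*(n:ℝ))*R)
        ≤ ∫⁻ r in Ioc ((2*(n:ℝ))*R) ((4*(n:ℝ))*R), F r := by
      have h1 : ∫⁻ r in Ioc ((2*(n:ℝ))*R) ((4*(n:ℝ))*R),
          (ENNReal.ofReal (a / (4*(n:ℝ)*R)) * σ (dCube n qx) *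
            ((ENNReal.ofReal B)⁻¹ * M) ^ δ : ℝ≥0∞)
          ≤ ∫⁻ r in Ioc ((2*(n:ℝ))*R) ((4*(n:ℝ))*R), F r := by
        apply lintegral_mono_ae
        rw [ae_restrict_iff' measurableSet_Ioc]
        exact ae_of_all _ A1
      rwa [setLIntegral_const, Real.volume_Ioc] at h1
    -- algebra: the constant works out
    have hBδpos : (0:ℝ) < B ^ δ := Real.rpow_pos_of_pos hBpos δ
    have hBδne0 : ENNReal.ofReal (B^δ) ≠ 0 := (ENNReal.ofReal_pos.2 hBδpos).ne'
    have e1 : ENNReal.ofReal (2*B^δ) * ENNReal.ofReal (a/(4*(n:ℝ)*R)) *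
        ENNReal.ofReal ((4*(n:ℝ))*R - (2*(n:ℝ))*R) = ENNReal.ofReal (a * B^δ) := by
      rw [← ENNReal.ofReal_mul (by positivity),
        ← ENNReal.ofReal_mul (mul_nonneg (by positivity) (div_nonneg ha0 h4nR.le))]
      congr 1
      field_simp
      ring
    have e2 : ENNReal.ofReal (a * B^δ) * (ENNReal.ofReal (B^δ))⁻¹ = ENNReal.ofReal a := by
      rw [ENNReal.ofReal_mul ha0, mul_assoc,
        ENNReal.mul_inv_cancel hBδne0 ENNReal.ofReal_ne_top, mul_one]
    have halg : ENNReal.ofReal (2*B^δ) * (ENNReal.ofReal (a/(4*(n:ℝ)*R)) * σ (dCube n qx) *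
        ((ENNReal.ofReal B)⁻¹ * M) ^ δ * ENNReal.ofReal ((4*(n:ℝ))*R - (2*(n:ℝ))*R))
        = ENNReal.ofReal a * σ (dCube n qx) * M ^ δ := by
      rw [ENNReal.mul_rpow_of_nonneg _ _ hδpos.le, ENNReal.inv_rpow,
        ENNReal.ofReal_rpow_of_pos hBpos]
      calc ENNReal.ofReal (2*B^δ) * (ENNReal.ofReal (a/(4*(n:ℝ)*R)) * σ (dCube n qx) *
            ((ENNReal.ofReal (B^δ))⁻¹ * M ^ δ) * ENNReal.ofReal ((4*(n:ℝ))*R - (2*(n:ℝ))*R))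
          = ((ENNReal.ofReal (2*B^δ) * ENNReal.ofReal (a/(4*(n:ℝ)*R)) *
              ENNReal.ofReal ((4*(n:ℝ))*R - (2*(n:ℝ))*R)) * (ENNReal.ofReal (B^δ))⁻¹) *
              (σ (dCube n qx) * M ^ δ) := by ring
        _ = (ENNReal.ofReal (a * B^δ) * (ENNReal.ofReal (B^δ))⁻¹) *
              (σ (dCube n qx) * M ^ δ) := by rw [e1]
        _ = ENNReal.ofReal a * (σ (dCube n qx) * M ^ δ) := by rw [e2]
        _ = ENNReal.ofReal a * σ (dCube n qx) * M ^ δ := by ring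
    calc f (dIdxOf n j x) = ENNReal.ofReal a * σ (dCube n qx) * M ^ δ := by
          rw [hf]
          show ENNReal.ofReal (k (4 * (n:ℝ) * sideLen n qx)) * σ (dCube n qx) * ch n qx x *
            (∫⁻ y in dCube n qx, Kbar n σ Kf qx y ∂μ) ^ δ = _
          rw [hside, hch, mul_one, ← hM, ← haa]
      _ = ENNReal.ofReal (2*B^δ) * (ENNReal.ofReal (a/(4*(n:ℝ)*R)) * σ (dCube n qx) *
            ((ENNReal.ofReal B)⁻¹ * M) ^ δ * ENNReal.ofReal ((4*(n:ℝ))*R - (2*(n:ℝ))*R)) :=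
          halg.symm
      _ ≤ ENNReal.ofReal (2*B^δ) * ∫⁻ r in Ioc ((2*(n:ℝ))*R) ((4*(n:ℝ))*R), F r :=
          mul_le_mul_right hlow _
  -- assemble over all scales
  have hsupp : Function.support f ⊆ Set.range (fun j => dIdxOf n j x) := by
    intro Q hQ
    by_contra hran
    apply hQ
    have hx : x ∉ dCube n Q := fun hmem => hran ⟨Q.1, (eq_dIdxOf_of_mem hmem).symm⟩
    have hch0 : ch n Q x = 0 := by rw [ch, Set.indicator_of_notMem hx]
    rw [hf]
    show ENNReal.ofReal (k (4 * (n:ℝ) * sideLen n Q)) * σ (dCube n Q) * ch n Q x *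
      (∫⁻ y in dCube n Q, Kbar n σ Kf Q y ∂μ) ^ δ = 0
    rw [hch0, mul_zero, zero_mul]
  have hdisjI : Pairwise (Function.onFun Disjoint
      (fun j : ℤ => Ioc ((2*(n:ℝ)) * (2:ℝ)^(-j)) ((4*(n:ℝ)) * (2:ℝ)^(-j)))) := by
    intro i i' hne
    show Disjoint (Ioc ((2*(n:ℝ)) * (2:ℝ)^(-i)) ((4*(n:ℝ)) * (2:ℝ)^(-i)))
      (Ioc ((2*(n:ℝ)) * (2:ℝ)^(-i')) ((4*(n:ℝ)) * (2:ℝ)^(-i')))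
    have ha2 : (0:ℝ) < 2*(n:ℝ) := by linarith
    have hb2 : (4:ℝ)*(n:ℝ) ≤ 2*(2*(n:ℝ)) := by linarith
    exact scaled_Ioc_disjoint ha2 hb2 hne
  have hIsub : (⋃ j : ℤ, Ioc ((2*(n:ℝ)) * (2:ℝ)^(-j)) ((4*(n:ℝ)) * (2:ℝ)^(-j))) ⊆ Ioi (0:ℝ) := by
    intro s hs
    simp only [Set.mem_iUnion] at hs
    obtain ⟨j, hj⟩ := hs
    have hR : (0:ℝ) < (2:ℝ)^(-j) := two_zpow_pos _
    have := hj.1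
    simp only [Set.mem_Ioi]
    nlinarith
  calc (∑' Q : DIdx n, f Q) = ∑' j : ℤ, f (dIdxOf n j x) :=
        (Function.Injective.tsum_eq (dIdxOf_injective n x) hsupp).symm
    _ ≤ ∑' j : ℤ, ENNReal.ofReal (2 * B ^ δ) *
        ∫⁻ r in Ioc ((2*(n:ℝ)) * (2:ℝ)^(-j)) ((4*(n:ℝ)) * (2:ℝ)^(-j)), F r :=
        ENNReal.tsum_le_tsum key
    _ = ENNReal.ofReal (2 * B ^ δ) * ∑' j : ℤ,
        ∫⁻ r in Ioc ((2*(n:ℝ)) * (2:ℝ)^(-j)) ((4*(n:ℝ)) * (2:ℝ)^(-j)), F r :=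
        ENNReal.tsum_mul_left
    _ = ENNReal.ofReal (2 * B ^ δ) *
        ∫⁻ r in ⋃ j : ℤ, Ioc ((2*(n:ℝ)) * (2:ℝ)^(-j)) ((4*(n:ℝ)) * (2:ℝ)^(-j)), F r := by
        rw [lintegral_iUnion (fun _ => measurableSet_Ioc) hdisjI]
    _ ≤ ENNReal.ofReal (2 * B ^ δ) * WolffC n σ k p μ x := by
        rw [hW]
        exact mul_le_mul_right
          (lintegral_mono' (Measure.restrict_mono hIsub le_rfl) le_rfl) _
end
end
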